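/- Fix λ > 0 and α : ℕ → ℝ≥0 with ∑_{k≥2} α(k)/(k−2)! < ∞ and α(k) > 0 for some k ≥ 2. Define F₁(g) = λ(1 − g) + ∑_{k≥2} (α(k)/k!)·(1 − k)·g^k on [0,1]. Then F₁ is strictly decreasing on [0,1], F₁(0) = λ > 0, F₁(1) < 0, and hence F₁ has a unique zero in (0,1). -/

import Mathlib

/-- `F₁` is strictly decreasing on `[0,1]`, `F₁(0) = λ > 0`, `F₁(1) < 0`, hence
has a unique zero in `(0,1)` (index shifted: `k = j + 2`). -/
theorem F1_unique_zero (lam : ℝ) (hlam : 0 < lam)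
    (α : ℕ → ℝ) (hα0 : ∀ k, 0 ≤ α k)
    (hsum : Summable (fun j : ℕ => α (j + 2) / (Nat.factorial j : ℝ)))
    (hpos : ∃ j : ℕ, 0 < α (j + 2))
    (F₁ : ℝ → ℝ)
    (hF₁ : ∀ g : ℝ, F₁ g =
      lam * (1 - g) + ∑' j : ℕ,
        α (j + 2) / (Nat.factorial (j + 2) : ℝ) * (1 - ((j : ℝ) + 2)) * g ^ (j + 2)) :
    StrictAntiOn F₁ (Set.Icc (0 : ℝ) 1) ∧
    F₁ 0 = lam ∧ F₁ 1 < 0 ∧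
    (∃! g : ℝ, g ∈ Set.Ioo (0 : ℝ) 1 ∧ F₁ g = 0) := by
  set c : ℕ → ℝ := fun j => α (j + 2) / (Nat.factorial (j + 2) : ℝ) * (1 - ((j : ℝ) + 2))
    with hcdef
  have hcnonpos : ∀ j, c j ≤ 0 := by
    intro j
    apply mul_nonpos_of_nonneg_of_nonpos
    · have := hα0 (j + 2)
      positivity
    · have : (0:ℝ) ≤ (j:ℝ) := Nat.cast_nonneg j
      linarith
  have habs : ∀ j, |c j| ≤ α (j + 2) / (Nat.factorial j : ℝ) := by
    intro j
    have h1 : |c j| = α (j + 2) / (Nat.factorial (j + 2) : ℝ) * ((j : ℝ) + 1) := by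
      rw [hcdef]
      rw [abs_mul, abs_of_nonneg (by have := hα0 (j+2); positivity),
        abs_of_nonpos (by have : (0:ℝ) ≤ (j:ℝ) := Nat.cast_nonneg j; linarith)]
      ring
    rw [h1]
    have hf : (Nat.factorial (j + 2) : ℝ) = ((j:ℝ)+2) * (((j:ℝ)+1) * (Nat.factorial j : ℝ)) := by
      rw [show j + 2 = (j+1) + 1 from rfl, Nat.factorial_succ, Nat.factorial_succ]
      push_cast
      ring
    have hfj : (0:ℝ) < (Nat.factorial j : ℝ) := by positivity
    have hα := hα0 (j + 2)
    rw [hf, div_mul_eq_mul_div, div_le_div_iff₀ (by positivity) hfj]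
    nlinarith [mul_nonneg hα hfj.le, mul_nonneg (mul_nonneg hα hfj.le) (Nat.cast_nonneg (α := ℝ) j)]
  have hsum_abs : Summable (fun j => |c j|) :=
    Summable.of_nonneg_of_le (fun j => abs_nonneg _) habs hsum
  have hsum_x : ∀ x : ℝ, |x| ≤ 1 → Summable (fun j => c j * x ^ (j + 2)) := by
    intro x hx
    apply Summable.of_abs
    apply Summable.of_nonneg_of_le (fun j => abs_nonneg _) _ hsum_abs
    intro j
    rw [abs_mul, abs_pow]
    calc |c j| * |x| ^ (j + 2) ≤ |c j| * 1 := by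
          apply mul_le_mul_of_nonneg_left _ (abs_nonneg _)
          exact pow_le_one₀ (abs_nonneg x) hx
      _ = |c j| := mul_one _
  -- strict antitonicity
  have hanti : StrictAntiOn F₁ (Set.Icc (0 : ℝ) 1) := by
    intro x hx y hy hxy
    rw [hF₁ x, hF₁ y]
    have hT : (∑' j, c j * y ^ (j + 2)) ≤ ∑' j, c j * x ^ (j + 2) := by
      apply Summable.tsum_le_tsum _ (hsum_x y (by rw [abs_of_nonneg (le_trans hx.1 hxy.le)]; exact hy.2))
        (hsum_x x (by rw [abs_of_nonneg hx.1]; exact hx.2))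
      intro j
      apply mul_le_mul_of_nonpos_left _ (hcnonpos j)
      exact pow_le_pow_left₀ hx.1 hxy.le _
    have : lam * (1 - y) < lam * (1 - x) := by nlinarith
    calc lam * (1 - y) + ∑' j, c j * y ^ (j + 2)
        ≤ lam * (1 - y) + ∑' j, c j * x ^ (j + 2) := by linarith
      _ < lam * (1 - x) + ∑' j, c j * x ^ (j + 2) := by linarith
  -- F₁ 0 = lam
  have hF0 : F₁ 0 = lam := by
    rw [hF₁ 0]
    have : ∀ j : ℕ, c j * (0:ℝ) ^ (j + 2) = 0 := by
      intro j; rw [zero_pow (by omega), mul_zero]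
    change lam * (1 - 0) + ∑' j : ℕ, c j * (0:ℝ) ^ (j + 2) = lam
    simp only [this, tsum_zero]
    ring
  -- F₁ 1 < 0
  have hF1neg : F₁ 1 < 0 := by
    rw [hF₁ 1]
    have h1 : ∀ j : ℕ, c j * (1:ℝ) ^ (j + 2) = c j := by intro j; rw [one_pow, mul_one]
    change lam * (1 - 1) + ∑' j : ℕ, c j * (1:ℝ) ^ (j + 2) < 0
    simp only [h1]
    obtain ⟨j₀, hj₀⟩ := hpos
    have hcj₀ : c j₀ < 0 := by
      apply mul_neg_of_pos_of_neg
      · positivity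
      · have : (0:ℝ) ≤ (j₀:ℝ) := Nat.cast_nonneg j₀
        linarith
    have hd : Summable (fun j => -c j) := (hsum_abs.of_abs).neg
    have hle : -c j₀ ≤ ∑' j, -c j :=
      Summable.le_tsum hd j₀ (fun j _ => by linarith [hcnonpos j])
    have : (∑' j, c j) ≤ c j₀ := by
      rw [← neg_neg (∑' j, c j), ← tsum_neg]
      linarith
    linarith
  -- continuity on [0,1]
  have hcont : ContinuousOn F₁ (Set.Icc (0:ℝ) 1) := by
    have hbase : ContinuousOn (fun g : ℝ => lam * (1 - g) + ∑' j, c j * g ^ (j + 2))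
        (Set.Icc (0:ℝ) 1) := by
      apply ContinuousOn.add (by fun_prop)
      rw [continuousOn_iff_continuous_restrict]
      apply continuous_tsum (u := fun j => |c j|)
        (fun j => by fun_prop) hsum_abs
      intro j x
      rw [Real.norm_eq_abs, abs_mul, abs_pow]
      have hx1 : |(x:ℝ)| ≤ 1 := by
        rw [abs_of_nonneg x.2.1]; exact x.2.2
      calc |c j| * |(x:ℝ)| ^ (j + 2) ≤ |c j| * 1 :=
            mul_le_mul_of_nonneg_left (pow_le_one₀ (abs_nonneg _) hx1) (abs_nonneg _)
        _ = |c j| := mul_one _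
    exact hbase.congr (fun x _ => hF₁ x)
  refine ⟨hanti, hF0, hF1neg, ?_⟩
  have hmem : (0:ℝ) ∈ Set.Ioo (F₁ 1) (F₁ 0) := ⟨hF1neg, by rw [hF0]; exact hlam⟩
  obtain ⟨g, hg, hgz⟩ := intermediate_value_Ioo' (by norm_num : (0:ℝ) ≤ 1) hcont hmem
  refine ⟨g, ⟨hg, hgz⟩, ?_⟩
  rintro g' ⟨hg', hgz'⟩
  exact hanti.injOn (Set.Ioo_subset_Icc_self hg') (Set.Ioo_subset_Icc_self hg)
    (by rw [hgz, hgz'])
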